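/- Under the bijection sending a weakly increasing parking function α of length n to a Dyck path of semilength n (where αᵢ = 1 + the number of down-steps before the i-th up-step), the number of lucky cars of α equals the number of returns of the Dyck path to the x-axis (counting the final return, i.e., the number of touches of the axis after the start). -/
import Mathlib


/-- The height of a path of up-steps (`true`) and down-steps (`false`). -/
def pathHeight (P : List Bool) : ℤ := (P.count true : ℤ) - (P.count false : ℤ)

/-- The (0-based) indices of the up-steps of a path. -/
def trueIdxs : List Bool → List ℕ
  | [] => []
  | b :: l => if b then 0 :: (trueIdxs l).map (· + 1) else (trueIdxs l).map (· + 1)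

/-- Under the bijection sending a Dyck path `P` of semilength `n` to the weakly
increasing parking function `α` with `αᵢ = 1 +` (number of down-steps before the
`i`-th up-step), the number of lucky cars of `α` (indices with `αᵢ = i`) equals the
number of returns of `P` to the x-axis (touches of the axis after the start). -/
lemma count_tf (l : List Bool) : l.count true + l.count false = l.length := by
  induction l with
  | nil => simp
  | cons b t ih => cases b <;> simp [List.count_cons] <;> omega

lemma trueIdxs_length (l : List Bool) : (trueIdxs l).length = l.count true := by
  induction l with
  | nil => simp [trueIdxs]
  | cons b t ih => cases b <;> simp [trueIdxs, ih, List.count_cons]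

lemma trueIdxs_cons_true (l : List Bool) :
    trueIdxs (true :: l) = 0 :: (trueIdxs l).map (· + 1) := by simp [trueIdxs]

lemma trueIdxs_cons_false (l : List Bool) :
    trueIdxs (false :: l) = (trueIdxs l).map (· + 1) := by simp [trueIdxs]

lemma trueIdxs_spec (l : List Bool) (i p : ℕ) :
    (trueIdxs l)[i]? = some p ↔
      (p < l.length ∧ l[p]? = some true ∧ (l.take p).count true = i) := by
  induction l generalizing i p with
  | nil => simp [trueIdxs]
  | cons b t ih =>
    cases b
    · simp only [trueIdxs, if_neg Bool.false_ne_true, List.getElem?_map]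
      constructor
      · rintro h
        obtain ⟨q, hq, rfl⟩ : ∃ q, (trueIdxs t)[i]? = some q ∧ p = q + 1 := by
          cases h' : (trueIdxs t)[i]? with
          | none => simp [h'] at h
          | some q => simp [h'] at h; exact ⟨q, rfl, h.symm⟩
        obtain ⟨h1, h2, h3⟩ := (ih i q).1 hq
        refine ⟨by simpa using h1, by simpa using h2, by simpa [List.count_cons] using h3⟩
      · rintro ⟨h1, h2, h3⟩
        cases p with
        | zero => simp at h2
        | succ q =>
          have := (ih i q).2 ⟨by simpa using h1, by simpa using h2,
            by simpa [List.count_cons] using h3⟩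
          simp [this]
    · simp only [trueIdxs_cons_true]
      match i with
      | 0 =>
        constructor
        · rintro h
          simp at h
          subst h
          simp
        · rintro ⟨h1, h2, h3⟩
          cases p with
          | zero => simp
          | succ q => simp [List.take_succ_cons, List.count_cons] at h3
      | j + 1 =>
        simp only [List.getElem?_cons_succ, List.getElem?_map]
        constructor
        · rintro h
          obtain ⟨q, hq, rfl⟩ : ∃ q, (trueIdxs t)[j]? = some q ∧ p = q + 1 := by
            cases h' : (trueIdxs t)[j]? with
            | none => simp [h'] at h
            | some q => simp [h'] at h; exact ⟨q, rfl, h.symm⟩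
          obtain ⟨h1, h2, h3⟩ := (ih j q).1 hq
          refine ⟨by simpa using h1, by simpa using h2, by simp [List.count_cons, h3]⟩
        · rintro ⟨h1, h2, h3⟩
          cases p with
          | zero => simp [List.take_succ_cons, List.count_cons] at h3
          | succ q =>
            have := (ih j q).2 ⟨by simpa using h1, by simpa using h2,
              by simpa [List.count_cons] using h3⟩
            simp [this]

theorem stmt12 (n : ℕ) (P : List Bool)
    (hlen : P.length = 2 * n)
    (hbal : pathHeight P = 0)
    (hpre : ∀ t, 0 ≤ pathHeight (P.take t))
    (α : Fin n → ℕ)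
    (hα : ∀ i : Fin n, α i = 1 + (P.take ((trueIdxs P).getD (i : ℕ) 0)).count false) :
    Nat.card {i : Fin n // α i = (i : ℕ) + 1} =
      ((Finset.Icc 1 (2 * n)).filter (fun t => pathHeight (P.take t) = 0)).card := by
  have hct : P.count true = n := by
    have h1 := count_tf P
    have h2 := hbal
    unfold pathHeight at h2
    omega
  have hlenT : (trueIdxs P).length = n := by rw [trueIdxs_length, hct]
  set p : Fin n → ℕ := fun i => (trueIdxs P).getD (i : ℕ) 0 with hp
  have hspec : ∀ i : Fin n, p i < 2 * n ∧ P[(p i)]? = some true ∧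
      (P.take (p i)).count true = (i : ℕ) := by
    intro i
    have hi : (i : ℕ) < (trueIdxs P).length := by rw [hlenT]; exact i.isLt
    have hsome : (trueIdxs P)[(i : ℕ)]? = some ((trueIdxs P)[(i : ℕ)]) :=
      List.getElem?_eq_getElem hi
    have h2 := (trueIdxs_spec P (i : ℕ) _).1 hsome
    have hpd : p i = (trueIdxs P)[(i : ℕ)] := by
      simp [hp, List.getD_eq_getElem?_getD, hsome]
    rw [hpd]
    exact ⟨by omega, h2.2.1, h2.2.2⟩
  have hluck : ∀ i : Fin n, (α i = (i : ℕ) + 1 ↔ pathHeight (P.take (p i)) = 0) := by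
    intro i
    obtain ⟨h1, h2, h3⟩ := hspec i
    have hlt : (P.take (p i)).length = p i := by
      rw [List.length_take]; omega
    have hsum := count_tf (P.take (p i))
    rw [h3, hlt] at hsum
    have hαi : α i = 1 + (P.take (p i)).count false := hα i
    rw [hαi]
    unfold pathHeight
    rw [h3]
    omega
  have hback : ∀ t, t < 2 * n → pathHeight (P.take t) = 0 → ∃ i : Fin n, p i = t := by
    intro t ht h0
    have htl : t < P.length := by omega
    have hstep : P.take (t + 1) = P.take t ++ [P[t]] := by
      rw [List.take_succ, List.getElem?_eq_getElem htl]; rfl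
    have htrue : P[t] = true := by
      by_contra hf'
      have hf2 : P[t] = false := by simpa using hf'
      have hpre' := hpre (t + 1)
      rw [hstep, hf2] at hpre'
      unfold pathHeight at hpre' h0
      simp [List.count_append] at hpre'
      omega
    have hilt : (P.take t).count true < n := by
      have hmono : (P.take (t + 1)).count true ≤ P.count true :=
        (List.take_sublist _ _).count_le _
      rw [hstep] at hmono
      simp [List.count_append, htrue] at hmono
      omega
    have hmem := (trueIdxs_spec P ((P.take t).count true) t).2
      ⟨htl, by rw [List.getElem?_eq_getElem htl, htrue], rfl⟩
    exact ⟨⟨_, hilt⟩, by simp [hp, List.getD_eq_getElem?_getD, hmem]⟩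
  have hcard : Nat.card {i : Fin n // α i = (i : ℕ) + 1} =
      (Finset.univ.filter (fun i : Fin n => α i = (i : ℕ) + 1)).card := by
    rw [Nat.card_eq_fintype_card, Fintype.card_subtype]
  rw [hcard]
  have hZ0 : (Finset.univ.filter (fun i : Fin n => α i = (i : ℕ) + 1)).card
      = ((Finset.range (2 * n)).filter (fun t => pathHeight (P.take t) = 0)).card := by
    apply Finset.card_bij (fun i _ => p i)
    · intro i hi
      simp only [Finset.mem_filter, Finset.mem_range]
      refine ⟨(hspec i).1, (hluck i).1 ?_⟩
      simpa using hi
    · intro i _ j _ hij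
      have h1 := (hspec i).2.2
      have h2 := (hspec j).2.2
      rw [hij] at h1
      rw [h1] at h2
      exact Fin.ext h2
    · intro t ht
      simp only [Finset.mem_filter, Finset.mem_range] at ht
      obtain ⟨i, hi⟩ := hback t ht.1 ht.2
      refine ⟨i, ?_, hi⟩
      simp only [Finset.mem_filter, Finset.mem_univ, true_and]
      rw [hluck i, hi]
      exact ht.2
  rw [hZ0]
  rcases Nat.eq_zero_or_pos n with rfl | hn
  · simp
  · have h0f : pathHeight (P.take 0) = 0 := by simp [pathHeight]
    have h2nf : pathHeight (P.take (2 * n)) = 0 := by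
      rw [← hlen, List.take_length]; exact hbal
    have e1 : Finset.range (2 * n) = insert 0 (Finset.Icc 1 (2 * n - 1)) := by
      ext x; simp only [Finset.mem_range, Finset.mem_insert, Finset.mem_Icc]; omega
    have e2 : Finset.Icc 1 (2 * n) = insert (2 * n) (Finset.Icc 1 (2 * n - 1)) := by
      ext x; simp only [Finset.mem_insert, Finset.mem_Icc]; omega
    rw [e1, e2, Finset.filter_insert, Finset.filter_insert, if_pos h0f, if_pos h2nf,
      Finset.card_insert_of_notMem, Finset.card_insert_of_notMem]
    · intro h; simp only [Finset.mem_filter, Finset.mem_Icc] at h; omega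
    · intro h; simp only [Finset.mem_filter, Finset.mem_Icc] at h; omega
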